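/- arXiv:0808.2626 — 5 statements merged into one kernel-verified Lean document; each statement's English description precedes it below -/
import Mathlib

section
/- Let a ≥ 4 and let α_1,…,α_a ≥ 2 be integers. Then there exist infinitely many tuples of nonnegative integers (n_{j,k}) for 1 ≤ k ≤ a, 1 ≤ j ≤ α_k, together with positive integers d, such that for every k, d = Σ_{j=1}^{α_k} j·n_{j,k}, and Σ_{k=1}^{a} Σ_{j=1}^{α_k} (j−1)·n_{j,k} = 2d−2. -/
/-- Auxiliary configuration: degree `2t+4`, three fully doubled fibers, one fiber with
`t` double points and `4` simple points, remaining fibers unramified. -/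
def rhCfg (a t : ℕ) : ℕ → ℕ → ℕ := fun k j =>
  if k < a then
    if j = 1 then (if k < 3 then 0 else if k = 3 then 4 else 2 * t + 4)
    else if j = 2 then (if k < 3 then t + 2 else if k = 3 then t else 0)
    else 0
  else 0

lemma rh_sum_two (A : ℕ) (hA : 2 ≤ A) (g : ℕ → ℕ) (hg : ∀ j, j ≠ 1 → j ≠ 2 → g j = 0) :
    ∑ j ∈ Finset.Icc 1 A, j * g j = g 1 + 2 * g 2 := by
  rw [← Finset.sum_subset (s₁ := ({1, 2} : Finset ℕ))]
  · simp [Finset.sum_pair]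
  · intro x hx
    simp only [Finset.mem_insert, Finset.mem_singleton] at hx
    simp only [Finset.mem_Icc]
    omega
  · intro x _ hxn
    simp only [Finset.mem_insert, Finset.mem_singleton, not_or] at hxn
    rw [hg x hxn.1 hxn.2, mul_zero]

lemma rh_sum_two' (A : ℕ) (hA : 2 ≤ A) (g : ℕ → ℕ) (hg : ∀ j, j ≠ 1 → j ≠ 2 → g j = 0) :
    ∑ j ∈ Finset.Icc 1 A, (j - 1) * g j = g 2 := by
  rw [← Finset.sum_subset (s₁ := ({1, 2} : Finset ℕ))]
  · simp [Finset.sum_pair]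
  · intro x hx
    simp only [Finset.mem_insert, Finset.mem_singleton] at hx
    simp only [Finset.mem_Icc]
    omega
  · intro x _ hxn
    simp only [Finset.mem_insert, Finset.mem_singleton, not_or] at hxn
    rw [hg x hxn.1 hxn.2, mul_zero]

/-- Riemann–Hurwitz counting: for `a ≥ 4` branch points with bounds `α k ≥ 2`, there are
infinitely many branching configurations `(d, n)` with `d = ∑ j·n_{j,k}` for each `k` and
`∑ (j-1)·n_{j,k} = 2d - 2`. -/
theorem infinitely_many_branching_data_of_four_points
    (a : ℕ) (ha : 4 ≤ a) (α : ℕ → ℕ) (hα : ∀ k < a, 2 ≤ α k) :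
    {x : ℕ × (ℕ → ℕ → ℕ) |
      1 ≤ x.1 ∧
      (∀ k j, x.2 k j ≠ 0 → k < a ∧ 1 ≤ j ∧ j ≤ α k) ∧
      (∀ k < a, x.1 = ∑ j ∈ Finset.Icc 1 (α k), j * x.2 k j) ∧
      (∑ k ∈ Finset.range a, ∑ j ∈ Finset.Icc 1 (α k), (j - 1) * x.2 k j)
        = 2 * x.1 - 2}.Infinite := by
  apply Set.infinite_of_injective_forall_mem
    (f := fun t : ℕ => ((2 * t + 4, rhCfg a t) : ℕ × (ℕ → ℕ → ℕ)))
  · intro t s h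
    have h1 : 2 * t + 4 = 2 * s + 4 := congrArg Prod.fst h
    omega
  · intro t
    have hzero : ∀ k, ∀ j, j ≠ 1 → j ≠ 2 → rhCfg a t k j = 0 := by
      intro k j h1 h2
      simp only [rhCfg, if_neg h1, if_neg h2]
      split <;> rfl
    refine ⟨by omega, ?_, ?_, ?_⟩
    · intro k j hne
      by_cases hk : k < a
      · refine ⟨hk, ?_, ?_⟩
        · by_contra hj
          exact hne (hzero k j (by omega) (by omega))
        · by_cases h1 : j = 1
          · have := hα k hk; omega
          by_cases h2 : j = 2
          · have := hα k hk; omega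
          · exact absurd (hzero k j h1 h2) hne
      · exact absurd (by simp [rhCfg, hk]) hne
    · intro k hk
      rw [rh_sum_two (α k) (hα k hk) _ (hzero k)]
      simp only [rhCfg, if_pos hk]
      rcases lt_trichotomy k 3 with h | h | h
      · simp [h]; omega
      · simp [h]; omega
      · have h3 : ¬ k < 3 := by omega
        have h4 : k ≠ 3 := by omega
        simp [h3, h4]
    · have hinner : ∀ k < a, ∑ j ∈ Finset.Icc 1 (α k), (j - 1) * rhCfg a t k j
          = rhCfg a t k 2 := fun k hk => rh_sum_two' (α k) (hα k hk) _ (hzero k)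
      rw [Finset.sum_congr rfl (fun k hk => hinner k (Finset.mem_range.mp hk))]
      rw [← Finset.sum_subset (s₁ := Finset.range 4)
          (Finset.range_subset_range.mpr ha) ?_]
      · simp [Finset.sum_range_succ, rhCfg, show (0:ℕ) < a by omega,
          show (1:ℕ) < a by omega, show (2:ℕ) < a by omega, show (3:ℕ) < a by omega]
        omega
      · intro k hk hk4
        have : ¬ k < 3 := by simp at hk4; omega
        have h4 : k ≠ 3 := by simp at hk4; omega
        simp [rhCfg, this, h4]
end

section
/- Let α ≥ 2 be an integer. Then there are only finitely many tuples of nonnegative integers (n_{1,1}, n_{2,1}, n_{1,2}, n_{2,2}, n_{1,3}, …, n_{α,3}) and positive integers d satisfying: d = n_{1,1} + 2n_{2,1}, d = n_{1,2} + 2n_{2,2}, d = Σ_{j=1}^{α} j·n_{j,3}, and (n_{2,1}) + (n_{2,2}) + Σ_{j=1}^{α} (j−1)n_{j,3} = 2d−2. -/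
open Finset

lemma branching_aux (α a b c e d : ℕ) (f : ℕ → ℕ) (hα : 2 ≤ α) (h1 : 1 ≤ d)
    (hsupp : ∀ j, f j ≠ 0 → 1 ≤ j ∧ j ≤ α)
    (h2 : d = a + 2 * b) (h3 : d = c + 2 * e)
    (h4 : d = ∑ j ∈ Finset.Icc 1 α, j * f j)
    (h5 : b + e + ∑ j ∈ Finset.Icc 1 α, (j - 1) * f j = 2 * d - 2) :
    d ≤ 2 * α ∧ ∀ j, f j ≤ 2 * α := by
  set s := ∑ j ∈ Finset.Icc 1 α, f j with hsdef
  set t := ∑ j ∈ Finset.Icc 1 α, (j - 1) * f j with htdef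
  have hts : t + s = d := by
    rw [h4, hsdef, htdef, ← Finset.sum_add_distrib]
    refine Finset.sum_congr rfl fun j hj => ?_
    obtain ⟨hj1, _⟩ := Finset.mem_Icc.mp hj
    obtain ⟨k, rfl⟩ : ∃ k, j = k + 1 := ⟨j - 1, by omega⟩
    simp [Nat.add_mul, Nat.one_mul]
  have hds : d ≤ α * s := by
    rw [h4, hsdef, Finset.mul_sum]
    refine Finset.sum_le_sum fun j hj => ?_
    exact Nat.mul_le_mul_right _ (Finset.mem_Icc.mp hj).2
  have hs2 : s ≤ 2 := by omega
  have hd : d ≤ 2 * α := le_trans hds (by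
    calc α * s ≤ α * 2 := Nat.mul_le_mul_left _ hs2
    _ = 2 * α := mul_comm _ _)
  refine ⟨hd, fun j => ?_⟩
  by_cases hj : f j = 0
  · simp [hj]
  · have hmem : j ∈ Finset.Icc 1 α := Finset.mem_Icc.mpr (hsupp j hj)
    have : f j ≤ s := Finset.single_le_sum (fun _ _ => Nat.zero_le _) hmem
    omega

/-- Finiteness of branching data for coverings of `P^1` branched over three points with
local degrees bounded by `2, 2, α`: the set of tuples
`(n₁₁, n₂₁, n₁₂, n₂₂, n₃, d)` with `d = n₁₁ + 2n₂₁ = n₁₂ + 2n₂₂ = ∑ j·n₃ j` and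
`n₂₁ + n₂₂ + ∑ (j-1)·n₃ j = 2d - 2` is finite. -/
theorem finitely_many_branching_data_two_two_alpha (α : ℕ) (hα : 2 ≤ α) :
    {x : ℕ × ℕ × ℕ × ℕ × (ℕ → ℕ) × ℕ |
      1 ≤ x.2.2.2.2.2 ∧
      (∀ j, x.2.2.2.2.1 j ≠ 0 → 1 ≤ j ∧ j ≤ α) ∧
      x.2.2.2.2.2 = x.1 + 2 * x.2.1 ∧
      x.2.2.2.2.2 = x.2.2.1 + 2 * x.2.2.2.1 ∧
      x.2.2.2.2.2 = ∑ j ∈ Finset.Icc 1 α, j * x.2.2.2.2.1 j ∧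
      x.2.1 + x.2.2.2.1 + ∑ j ∈ Finset.Icc 1 α, (j - 1) * x.2.2.2.2.1 j
        = 2 * x.2.2.2.2.2 - 2}.Finite := by
  classical
  set B := 2 * α with hB
  apply Set.Finite.of_finite_image
    (f := fun x : ℕ × ℕ × ℕ × ℕ × (ℕ → ℕ) × ℕ =>
      (x.1, x.2.1, x.2.2.1, x.2.2.2.1, (fun i : Fin (α + 1) => x.2.2.2.2.1 i), x.2.2.2.2.2))
  · apply Set.Finite.subset
      (s := Set.Iic B ×ˢ Set.Iic B ×ˢ Set.Iic B ×ˢ Set.Iic B ×ˢ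
        (Set.pi Set.univ fun _ : Fin (α + 1) => Set.Iic B) ×ˢ Set.Iic B)
    · exact (Set.finite_Iic B).prod ((Set.finite_Iic B).prod ((Set.finite_Iic B).prod
        ((Set.finite_Iic B).prod (((Set.Finite.pi fun _ => Set.finite_Iic B)).prod
          (Set.finite_Iic B)))))
    · rintro _ ⟨⟨a, b, c, e, f, d⟩, hx, rfl⟩
      dsimp only [Set.mem_setOf_eq] at hx ⊢
      obtain ⟨h1, hsupp, h2, h3, h4, h5⟩ := hx
      obtain ⟨hd, hf⟩ := branching_aux α a b c e d f hα h1 hsupp h2 h3 h4 h5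
      simp only at h2 h3
      simp only [Set.mem_prod, Set.mem_pi, Set.mem_univ, Set.mem_Iic, forall_true_left]
      exact ⟨by omega, by omega, by omega, by omega, fun i => hf i, hd⟩
  · rintro ⟨a, b, c, e, f, d⟩ hx ⟨a', b', c', e', f', d'⟩ hy h
    obtain ⟨_, hsuppx, _⟩ := hx
    obtain ⟨_, hsuppy, _⟩ := hy
    simp only [Prod.mk.injEq] at h
    obtain ⟨ha, hb, hc, he, hfun, hd⟩ := h
    refine Prod.ext ha (Prod.ext hb (Prod.ext hc (Prod.ext he (Prod.ext ?_ hd))))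
    funext j
    by_cases hj : j ≤ α
    · have := congrFun hfun ⟨j, by omega⟩
      simpa using this
    · have hx0 : f j = 0 := by
        by_contra h0; exact hj (hsuppx j h0).2
      have hy0 : f' j = 0 := by
        by_contra h0; exact hj (hsuppy j h0).2
      simp [hx0, hy0]
end

section
/- Consider the system in nonnegative integers n_{1,1}, n_{2,1}, n_{1,2}, n_{2,2}, n_{1,3}, …, n_{α,3} (α ≥ 2) with common degree d ≥ 1: d = n_{1,1} + 2n_{2,1} = n_{1,2} + 2n_{2,2} = Σ_{j=1}^{α} j·n_{j,3}, and n_{2,1} + n_{2,2} + Σ_{j=1}^{α}(j−1)n_{j,3} = 2d − 2. Any solution satisfies Σ_{j=1}^{α} n_{j,3} ≤ 2. -/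
/-- In any Riemann–Hurwitz branching configuration for coverings of `P^1` branched over
three points with local degrees bounded by `2, 2, α`, the number of preimages over the
third branch point is at most `2`. -/
theorem third_fiber_size_le_two
    (α : ℕ) (hα : 2 ≤ α) (n₁₁ n₂₁ n₁₂ n₂₂ d : ℕ) (n₃ : ℕ → ℕ)
    (hd : 1 ≤ d)
    (h₁ : d = n₁₁ + 2 * n₂₁)
    (h₂ : d = n₁₂ + 2 * n₂₂)
    (h₃ : d = ∑ j ∈ Finset.Icc 1 α, j * n₃ j)
    (hRH : n₂₁ + n₂₂ + ∑ j ∈ Finset.Icc 1 α, (j - 1) * n₃ j = 2 * d - 2) :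
    ∑ j ∈ Finset.Icc 1 α, n₃ j ≤ 2 := by
  have key : ∑ j ∈ Finset.Icc 1 α, (j - 1) * n₃ j + ∑ j ∈ Finset.Icc 1 α, n₃ j = d := by
    rw [h₃, ← Finset.sum_add_distrib]
    refine Finset.sum_congr rfl fun j hj => ?_
    have h1 : 1 ≤ j := (Finset.mem_Icc.mp hj).1
    obtain ⟨m, rfl⟩ := Nat.exists_eq_add_of_le h1
    simp [Nat.add_sub_cancel_left, add_mul, one_mul]
    ring
  omega
end

section
/- Let α ∈ {3, 4, 5}. Consider nonnegative integers n_{1,1}, n_{2,1} (over the first branch point, local degrees ≤ 2), n_{1,2}, n_{2,2}, n_{3,2} (over the second, local degrees ≤ 3), n_{1,3}, …, n_{α,3} (over the third, local degrees ≤ α) and d ≥ 1 with d = n_{1,1} + 2n_{2,1} = n_{1,2} + 2n_{2,2} + 3n_{3,2} = Σ_{j=1}^{α} j n_{j,3}, and n_{2,1} + (n_{2,2} + 2n_{3,2}) + Σ_{j=1}^{α} (j−1)n_{j,3} = 2d−2. Then the set of all such solutions is finite. -/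
/-- Finiteness of Riemann–Hurwitz branching data for coverings of `P^1` branched over
three points with profiles bounded by `(2, 3, α)`, `α ∈ {3,4,5}`.  A tuple is
`((n₁₁, n₂₁), (n₁₂, n₂₂, n₃₂), n₃, d)`. -/
theorem finitely_many_branching_data_two_three_exceptional
    (α : ℕ) (hα : α = 3 ∨ α = 4 ∨ α = 5) :
    {x : (ℕ × ℕ) × (ℕ × ℕ × ℕ) × (ℕ → ℕ) × ℕ |
      1 ≤ x.2.2.2 ∧
      (∀ j, x.2.2.1 j ≠ 0 → 1 ≤ j ∧ j ≤ α) ∧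
      x.2.2.2 = x.1.1 + 2 * x.1.2 ∧
      x.2.2.2 = x.2.1.1 + 2 * x.2.1.2.1 + 3 * x.2.1.2.2 ∧
      x.2.2.2 = ∑ j ∈ Finset.Icc 1 α, j * x.2.2.1 j ∧
      x.1.2 + (x.2.1.2.1 + 2 * x.2.1.2.2) + ∑ j ∈ Finset.Icc 1 α, (j - 1) * x.2.2.1 j
        = 2 * x.2.2.2 - 2}.Finite := by
  have hα5 : α ≤ 5 := by omega
  set S : Set ((ℕ × ℕ) × (ℕ × ℕ × ℕ) × (ℕ → ℕ) × ℕ) :=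
    {x | 1 ≤ x.2.2.2 ∧
      (∀ j, x.2.2.1 j ≠ 0 → 1 ≤ j ∧ j ≤ α) ∧
      x.2.2.2 = x.1.1 + 2 * x.1.2 ∧
      x.2.2.2 = x.2.1.1 + 2 * x.2.1.2.1 + 3 * x.2.1.2.2 ∧
      x.2.2.2 = ∑ j ∈ Finset.Icc 1 α, j * x.2.2.1 j ∧
      x.1.2 + (x.2.1.2.1 + 2 * x.2.1.2.2) + ∑ j ∈ Finset.Icc 1 α, (j - 1) * x.2.2.1 j
        = 2 * x.2.2.2 - 2} with hS
  have key : ∀ x ∈ S, x.1.1 ≤ 60 ∧ x.1.2 ≤ 60 ∧ x.2.1.1 ≤ 60 ∧ x.2.1.2.1 ≤ 60 ∧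
      x.2.1.2.2 ≤ 60 ∧ (∀ j, x.2.2.1 j ≤ 60) ∧ x.2.2.2 ≤ 60 := by
    rintro ⟨⟨a, b⟩, ⟨p, q, r⟩, n, d⟩ ⟨hd1, hsupp, h1, h2, h3, hRH⟩
    simp only at hd1 hsupp h1 h2 h3 hRH ⊢
    -- the key inequality: α * Σ (j-1) n_j ≤ (α-1) * d
    have hS3 : α * ∑ j ∈ Finset.Icc 1 α, (j - 1) * n j ≤ (α - 1) * d := by
      rw [h3, Finset.mul_sum, Finset.mul_sum]
      apply Finset.sum_le_sum
      intro j hj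
      rw [Finset.mem_Icc] at hj
      obtain ⟨hj1, hj2⟩ := hj
      obtain ⟨k, rfl⟩ : ∃ k, j = k + 1 := ⟨j - 1, by omega⟩
      obtain ⟨m, rfl⟩ : ∃ m, α = m + 1 := ⟨α - 1, by omega⟩
      simp only [Nat.add_sub_cancel]
      have hk : k ≤ m := by omega
      have := Nat.mul_le_mul_right (n (k + 1)) hk
      nlinarith
    have hd60 : d ≤ 60 := by
      set s := ∑ j ∈ Finset.Icc 1 α, (j - 1) * n j with hsdef
      rcases hα with rfl | rfl | rfl <;> omega
    refine ⟨by omega, by omega, by omega, by omega, by omega, ?_, hd60⟩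
    intro j
    by_cases hz : n j = 0
    · omega
    · obtain ⟨hj1, hj2⟩ := hsupp j hz
      have hle : j * n j ≤ d := by
        rw [h3]
        exact Finset.single_le_sum (f := fun i => i * n i) (fun i _ => Nat.zero_le _)
          (Finset.mem_Icc.mpr ⟨hj1, hj2⟩)
      have : n j ≤ j * n j := Nat.le_mul_of_pos_left (n j) (by omega)
      omega
  apply Set.Finite.of_finite_image
    (f := fun x => (x.1, x.2.1, (fun i : Fin 6 => x.2.2.1 i.val), x.2.2.2))
  · have hfin : ((Set.Iic (60 : ℕ) ×ˢ Set.Iic (60 : ℕ)) ×ˢ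
        (Set.Iic (60 : ℕ) ×ˢ Set.Iic (60 : ℕ) ×ˢ Set.Iic (60 : ℕ)) ×ˢ
        (Set.pi Set.univ fun _ : Fin 6 => Set.Iic (60 : ℕ)) ×ˢ Set.Iic (60 : ℕ)).Finite :=
      (((Set.finite_Iic _).prod (Set.finite_Iic _)).prod
        (((Set.finite_Iic _).prod ((Set.finite_Iic _).prod (Set.finite_Iic _))).prod
          ((Set.Finite.pi fun _ => Set.finite_Iic _).prod (Set.finite_Iic _))))
    apply Set.Finite.subset hfin
    rintro _ ⟨x, hx, rfl⟩
    obtain ⟨b1, b2, b3, b4, b5, b6, b7⟩ := key x hx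
    simp only [Set.mem_prod, Set.mem_pi, Set.mem_univ, Set.mem_Iic, forall_true_left]
    exact ⟨⟨b1, b2⟩, ⟨b3, b4, b5⟩, fun i => b6 i.val, b7⟩
  · rintro ⟨⟨a, b⟩, ⟨p, q, r⟩, n, d⟩ hx ⟨⟨a', b'⟩, ⟨p', q', r'⟩, n', d'⟩ hy h
    simp only [Prod.mk.injEq] at h ⊢
    obtain ⟨h1, h2, h3, h4⟩ := h
    refine ⟨h1, h2, ?_, h4⟩
    funext j
    by_cases hj : j < 6
    · exact congrFun h3 ⟨j, hj⟩
    · have hx' := hx.2.1 j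
      have hy' := hy.2.1 j
      by_cases hz : n j = 0
      · by_cases hz' : n' j = 0
        · rw [hz, hz']
        · have := hy' hz'; omega
      · have := hx' hz; omega
end

section
/- For the quotient ring A = ℂ[x,y,z]/(xy, xz, yz, 2x² − 2y², 2x² − r z^r, 2y² − r z^r) with r ≥ 2 an integer, A is a finite-dimensional ℂ-vector space of dimension r + 3, with basis {1, x, y, z, z², …, z^{r−1}, x²}. -/
open MvPolynomial

/-- The presentation ideal of the orbifold cohomology ring `H*_orb(P^1_{2,2,r})`:
`(xy, xz, yz, 2x² - 2y², 2x² - r z^r, 2y² - r z^r)`. -/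
noncomputable def orbCohomIdeal (r : ℕ) : Ideal (MvPolynomial (Fin 3) ℂ) :=
  Ideal.span
    {X 0 * X 1, X 0 * X 2, X 1 * X 2,
     2 * X 0 ^ 2 - 2 * X 1 ^ 2,
     2 * X 0 ^ 2 - C (r : ℂ) * X 2 ^ r,
     2 * X 1 ^ 2 - C (r : ℂ) * X 2 ^ r}

namespace OrbAux

/-- Standard basis vector of `ℂ^{r+3}`. -/
noncomputable def es (r k : ℕ) (h : k < r + 3) : Fin (r + 3) → ℂ :=
  Pi.single (⟨k, h⟩ : Fin (r + 3)) (1 : ℂ)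

/-- Normal form of a monomial with exponents `(a, b, c)`, as a coordinate vector. -/
noncomputable def nf3 (r a b c : ℕ) : Fin (r + 3) → ℂ :=
  if b = 0 ∧ c = 0 then
    (if a = 0 then es r 0 (by omega)
     else if a = 1 then es r 1 (by omega)
     else if a = 2 then es r (r + 2) (by omega) else 0)
  else if a = 0 ∧ c = 0 then
    (if b = 1 then es r 2 (by omega)
     else if b = 2 then es r (r + 2) (by omega) else 0)
  else if a = 0 ∧ b = 0 then
    (if h : c < r then es r (c + 2) (by omega)
     else if c = r then (2 / r : ℂ) • es r (r + 2) (by omega) else 0)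
  else 0

/-- Normal form of a monomial, as a coordinate vector. -/
noncomputable def nf (r : ℕ) (m : Fin 3 →₀ ℕ) : Fin (r + 3) → ℂ :=
  nf3 r (m 0) (m 1) (m 2)

lemma nf3_mixed01 (r a b c : ℕ) : nf3 r (a + 1) (b + 1) c = 0 := by
  simp [nf3]

lemma nf3_mixed02 (r a b c : ℕ) : nf3 r (a + 1) b (c + 1) = 0 := by
  simp [nf3]

lemma nf3_mixed12 (r a b c : ℕ) : nf3 r a (b + 1) (c + 1) = 0 := by
  simp [nf3]

set_option maxHeartbeats 1000000 in
lemma nf3_rel1 (r a b c : ℕ) :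
    (2 : ℂ) • nf3 r (a + 2) b c = (2 : ℂ) • nf3 r a (b + 2) c := by
  unfold nf3
  split_ifs <;> first | rfl | omega | (exfalso; simp_all; done) | (simp; done) | simp_all

set_option maxHeartbeats 1000000 in
lemma nf3_rel2 (r : ℕ) (hr : r ≠ 0) (a b c : ℕ) :
    (2 : ℂ) • nf3 r (a + 2) b c = (r : ℂ) • nf3 r a b (c + r) := by
  have hrC : (r : ℂ) ≠ 0 := Nat.cast_ne_zero.mpr hr
  unfold nf3
  split_ifs <;> first
    | rfl | omega
    | (exfalso; simp_all; done)
    | (simp; done)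
    | (rw [smul_smul]; congr 1; field_simp)

lemma nf3_rel3 (r : ℕ) (hr : r ≠ 0) (a b c : ℕ) :
    (2 : ℂ) • nf3 r a (b + 2) c = (r : ℂ) • nf3 r a b (c + r) :=
  (nf3_rel1 r a b c).symm.trans (nf3_rel2 r hr a b c)

/-- The coordinate linear map `ℂ[x,y,z] → ℂ^{r+3}`. -/
noncomputable def phi (r : ℕ) : MvPolynomial (Fin 3) ℂ →ₗ[ℂ] (Fin (r + 3) → ℂ) :=
  (MvPolynomial.basisMonomials (Fin 3) ℂ).constr ℂ (nf r)

lemma phi_monomial (r : ℕ) (m : Fin 3 →₀ ℕ) (c : ℂ) :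
    phi r (monomial m c) = c • nf r m := by
  have h1 : (monomial m c : MvPolynomial (Fin 3) ℂ) = c • monomial m 1 := by
    rw [smul_monomial, smul_eq_mul, mul_one]
  have h2 : (monomial m 1 : MvPolynomial (Fin 3) ℂ)
      = MvPolynomial.basisMonomials (Fin 3) ℂ m := by
    rw [coe_basisMonomials]
  rw [h1, map_smul, h2]
  congr 1
  exact Module.Basis.constr_basis _ _ _ _

lemma X_mul_X_eq (i j : Fin 3) :
    (X i * X j : MvPolynomial (Fin 3) ℂ)
      = monomial (Finsupp.single i 1 + Finsupp.single j 1) 1 := by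
  rw [show (X i : MvPolynomial (Fin 3) ℂ) = X i ^ 1 from (pow_one _).symm,
    show (X j : MvPolynomial (Fin 3) ℂ) = X j ^ 1 from (pow_one _).symm,
    X_pow_eq_monomial, X_pow_eq_monomial, monomial_mul, one_mul]

lemma single_apply_sum (m : Fin 3 →₀ ℕ) (i j : Fin 3) (k : Fin 3) :
    ((m + (Finsupp.single i 1 + Finsupp.single j 1) : Fin 3 →₀ ℕ)) k
      = m k + ((if i = k then 1 else 0) + (if j = k then 1 else 0)) := by
  simp [Finsupp.single_apply]

lemma phi_ideal (r : ℕ) (hr : r ≠ 0) : ∀ f ∈ orbCohomIdeal r, phi r f = 0 := by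
  have key : ∀ f ∈ orbCohomIdeal r, ∀ q, phi r (q * f) = 0 := by
    intro f hf
    refine Submodule.span_induction ?_ ?_ ?_ ?_ hf
    · intro g hg
      have hmono : ∀ (i j : Fin 3),
          (∀ m : Fin 3 →₀ ℕ, nf r (m + (Finsupp.single i 1 + Finsupp.single j 1)) = 0) →
          ∀ q, phi r (q * (X i * X j)) = 0 := by
        intro i j hnf q
        induction q using MvPolynomial.induction_on' with
        | monomial m c =>
          rw [X_mul_X_eq, monomial_mul, phi_monomial, hnf, smul_zero]
        | add p q hp hq =>
          rw [add_mul, map_add, hp, hq, add_zero]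
      have hC2 : (2 : MvPolynomial (Fin 3) ℂ) = C 2 := by
        rw [map_ofNat]
      simp only [Set.mem_insert_iff, Set.mem_singleton_iff] at hg
      rcases hg with rfl | rfl | rfl | rfl | rfl | rfl
      · refine hmono 0 1 ?_
        intro m
        have : nf r (m + (Finsupp.single 0 1 + Finsupp.single 1 1))
            = nf3 r (m 0 + 1) (m 1 + 1) (m 2) := by
          unfold nf
          rw [single_apply_sum, single_apply_sum, single_apply_sum]
          norm_num [Fin.ext_iff]
        rw [this, nf3_mixed01]
      · refine hmono 0 2 ?_
        intro m
        have : nf r (m + (Finsupp.single 0 1 + Finsupp.single 2 1))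
            = nf3 r (m 0 + 1) (m 1) (m 2 + 1) := by
          unfold nf
          rw [single_apply_sum, single_apply_sum, single_apply_sum]
          norm_num [Fin.ext_iff]
        rw [this, nf3_mixed02]
      · refine hmono 1 2 ?_
        intro m
        have : nf r (m + (Finsupp.single 1 1 + Finsupp.single 2 1))
            = nf3 r (m 0) (m 1 + 1) (m 2 + 1) := by
          unfold nf
          rw [single_apply_sum, single_apply_sum, single_apply_sum]
          norm_num [Fin.ext_iff]
        rw [this, nf3_mixed12]
      · intro q
        induction q using MvPolynomial.induction_on' with
        | monomial m c =>
          rw [mul_sub, hC2, X_pow_eq_monomial, X_pow_eq_monomial,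
            show (C 2 * monomial (Finsupp.single (0 : Fin 3) 2) (1 : ℂ))
              = monomial (Finsupp.single (0 : Fin 3) 2) (2 : ℂ) by
                rw [C_mul_monomial, mul_one],
            show (C 2 * monomial (Finsupp.single (1 : Fin 3) 2) (1 : ℂ))
              = monomial (Finsupp.single (1 : Fin 3) 2) (2 : ℂ) by
                rw [C_mul_monomial, mul_one],
            monomial_mul, monomial_mul, map_sub, phi_monomial, phi_monomial]
          have e0 : nf r (m + Finsupp.single 0 2) = nf3 r (m 0 + 2) (m 1) (m 2) := by
            unfold nf
            simp [Finsupp.single_apply]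
          have e1 : nf r (m + Finsupp.single 1 2) = nf3 r (m 0) (m 1 + 2) (m 2) := by
            unfold nf
            simp [Finsupp.single_apply]
          rw [e0, e1, mul_smul, mul_smul, nf3_rel1, sub_self]
        | add p q hp hq =>
          rw [add_mul, map_add, hp, hq, add_zero]
      · intro q
        induction q using MvPolynomial.induction_on' with
        | monomial m c =>
          rw [mul_sub, hC2, X_pow_eq_monomial, X_pow_eq_monomial,
            show (C 2 * monomial (Finsupp.single (0 : Fin 3) 2) (1 : ℂ))
              = monomial (Finsupp.single (0 : Fin 3) 2) (2 : ℂ) by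
                rw [C_mul_monomial, mul_one],
            show (C (r : ℂ) * monomial (Finsupp.single (2 : Fin 3) r) (1 : ℂ))
              = monomial (Finsupp.single (2 : Fin 3) r) ((r : ℂ)) by
                rw [C_mul_monomial, mul_one],
            monomial_mul, monomial_mul, map_sub, phi_monomial, phi_monomial]
          have e0 : nf r (m + Finsupp.single 0 2) = nf3 r (m 0 + 2) (m 1) (m 2) := by
            unfold nf
            simp [Finsupp.single_apply]
          have e2 : nf r (m + Finsupp.single 2 r) = nf3 r (m 0) (m 1) (m 2 + r) := by
            unfold nf
            simp [Finsupp.single_apply]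
          rw [e0, e2, mul_smul, mul_smul, nf3_rel2 r hr, sub_self]
        | add p q hp hq =>
          rw [add_mul, map_add, hp, hq, add_zero]
      · intro q
        induction q using MvPolynomial.induction_on' with
        | monomial m c =>
          rw [mul_sub, hC2, X_pow_eq_monomial, X_pow_eq_monomial,
            show (C 2 * monomial (Finsupp.single (1 : Fin 3) 2) (1 : ℂ))
              = monomial (Finsupp.single (1 : Fin 3) 2) (2 : ℂ) by
                rw [C_mul_monomial, mul_one],
            show (C (r : ℂ) * monomial (Finsupp.single (2 : Fin 3) r) (1 : ℂ))
              = monomial (Finsupp.single (2 : Fin 3) r) ((r : ℂ)) by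
                rw [C_mul_monomial, mul_one],
            monomial_mul, monomial_mul, map_sub, phi_monomial, phi_monomial]
          have e1 : nf r (m + Finsupp.single 1 2) = nf3 r (m 0) (m 1 + 2) (m 2) := by
            unfold nf
            simp [Finsupp.single_apply]
          have e2 : nf r (m + Finsupp.single 2 r) = nf3 r (m 0) (m 1) (m 2 + r) := by
            unfold nf
            simp [Finsupp.single_apply]
          rw [e1, e2, mul_smul, mul_smul, nf3_rel3 r hr, sub_self]
        | add p q hp hq =>
          rw [add_mul, map_add, hp, hq, add_zero]
    · intro q
      rw [mul_zero, map_zero]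
    · intro x y _ _ px py q
      rw [mul_add, map_add, px q, py q, add_zero]
    · intro a x _ px q
      rw [smul_eq_mul, ← mul_assoc, px (q * a)]
  intro f hf
  simpa using key f hf 1

/-- The basis polynomials. -/
noncomputable def bpoly (r : ℕ) (i : Fin (r + 3)) : MvPolynomial (Fin 3) ℂ :=
  if (i : ℕ) = 0 then 1
  else if (i : ℕ) = 1 then X 0
  else if (i : ℕ) = 2 then X 1
  else if (i : ℕ) = r + 2 then X 0 ^ 2
  else X 2 ^ ((i : ℕ) - 2)

/-- The candidate basis vectors in the quotient. -/
noncomputable def bvec (r : ℕ) (i : Fin (r + 3)) :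
    MvPolynomial (Fin 3) ℂ ⧸ orbCohomIdeal r :=
  Ideal.Quotient.mk (orbCohomIdeal r) (bpoly r i)

lemma fin3_decomp (m : Fin 3 →₀ ℕ) :
    m = Finsupp.single 0 (m 0) + Finsupp.single 1 (m 1) + Finsupp.single 2 (m 2) := by
  ext k
  fin_cases k <;> simp [Finsupp.single_apply]

lemma monomial_eq_prod (m : Fin 3 →₀ ℕ) :
    (monomial m 1 : MvPolynomial (Fin 3) ℂ) = X 0 ^ m 0 * X 1 ^ m 1 * X 2 ^ m 2 := by
  rw [X_pow_eq_monomial, X_pow_eq_monomial, X_pow_eq_monomial, monomial_mul, monomial_mul,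
    one_mul, one_mul, ← fin3_decomp m]

section quotrels

variable (r : ℕ) (hr : 2 ≤ r)

include hr

local notation "π" => Ideal.Quotient.mk (orbCohomIdeal r)

omit hr in
lemma gen_zero (g : MvPolynomial (Fin 3) ℂ)
    (hg : g ∈ ({X 0 * X 1, X 0 * X 2, X 1 * X 2,
     2 * X 0 ^ 2 - 2 * X 1 ^ 2,
     2 * X 0 ^ 2 - C (r : ℂ) * X 2 ^ r,
     2 * X 1 ^ 2 - C (r : ℂ) * X 2 ^ r} : Set (MvPolynomial (Fin 3) ℂ))) :
    π g = 0 :=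
  Ideal.Quotient.eq_zero_iff_mem.mpr (Ideal.subset_span hg)

omit hr in
lemma smul_cancel {c : ℂ} (hc : c ≠ 0) {a b : MvPolynomial (Fin 3) ℂ ⧸ orbCohomIdeal r}
    (h : c • a = c • b) : a = b := by
  have := congrArg (fun t => c⁻¹ • t) h
  simpa [smul_smul, inv_mul_cancel₀ hc] using this

omit hr in
lemma mk_smul (c : ℂ) (p : MvPolynomial (Fin 3) ℂ) : π (c • p) = c • π p := by
  rw [← Ideal.Quotient.mkₐ_eq_mk ℂ, map_smul]

omit hr in
lemma two_mul_eq_smul (u : MvPolynomial (Fin 3) ℂ ⧸ orbCohomIdeal r) :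
    2 * u = (2 : ℂ) • u := by
  rw [two_mul, two_smul]

omit hr in
lemma huv : π (X 0) * π (X 1) = 0 := by
  rw [← map_mul]; exact gen_zero r _ (by simp)

omit hr in
lemma huw : π (X 0) * π (X 2) = 0 := by
  rw [← map_mul]; exact gen_zero r _ (by simp)

omit hr in
lemma hvw : π (X 1) * π (X 2) = 0 := by
  rw [← map_mul]; exact gen_zero r _ (by simp)

omit hr in
lemma two_u_sq : (2 : ℂ) • (π (X 0)) ^ 2 = π (2 * X 0 ^ 2) := by
  rw [map_mul, map_pow, map_ofNat, two_mul_eq_smul]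

omit hr in
lemma two_v_sq : (2 : ℂ) • (π (X 1)) ^ 2 = π (2 * X 1 ^ 2) := by
  rw [map_mul, map_pow, map_ofNat, two_mul_eq_smul]

omit hr in
lemma r_w_pow : (r : ℂ) • (π (X 2)) ^ r = π (C (r : ℂ) * X 2 ^ r) := by
  rw [← smul_eq_C_mul, mk_smul, map_pow]

omit hr in
lemma hvveq : (π (X 1)) ^ 2 = (π (X 0)) ^ 2 := by
  refine smul_cancel r two_ne_zero ?_
  rw [two_u_sq r, two_v_sq r]
  have := gen_zero r _ (show 2 * X 0 ^ 2 - 2 * X 1 ^ 2 ∈ _ by simp)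
  rw [map_sub, sub_eq_zero] at this
  exact this.symm

omit hr in
lemma hwr : (r : ℂ) • (π (X 2)) ^ r = (2 : ℂ) • (π (X 0)) ^ 2 := by
  rw [two_u_sq r, r_w_pow r]
  have := gen_zero r _ (show 2 * X 0 ^ 2 - C (r : ℂ) * X 2 ^ r ∈ _ by simp)
  rw [map_sub, sub_eq_zero] at this
  exact this.symm

lemma hwr' : (π (X 2)) ^ r = ((2 : ℂ) / r) • (π (X 0)) ^ 2 := by
  have hrC : (r : ℂ) ≠ 0 := Nat.cast_ne_zero.mpr (by omega)
  rw [div_eq_mul_inv, mul_comm, mul_smul, ← hwr r, smul_smul,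
    inv_mul_cancel₀ hrC, one_smul]

lemma wr_mul_u : (π (X 2)) ^ r * π (X 0) = 0 := by
  have h1 : (π (X 2)) ^ r = (π (X 2)) ^ (r - 1) * π (X 2) := by
    rw [← pow_succ, Nat.sub_add_cancel (by omega : 1 ≤ r)]
  rw [h1, mul_assoc, mul_comm (π (X 2)) (π (X 0)), huw r, mul_zero]

lemma wr_mul_v : (π (X 2)) ^ r * π (X 1) = 0 := by
  have h1 : (π (X 2)) ^ r = (π (X 2)) ^ (r - 1) * π (X 2) := by
    rw [← pow_succ, Nat.sub_add_cancel (by omega : 1 ≤ r)]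
  rw [h1, mul_assoc, mul_comm (π (X 2)) (π (X 1)), hvw r, mul_zero]

lemma hu3 : (π (X 0)) ^ 3 = 0 := by
  refine smul_cancel r two_ne_zero ?_
  have : (2 : ℂ) • (π (X 0)) ^ 3 = ((2 : ℂ) • (π (X 0)) ^ 2) * π (X 0) := by
    rw [smul_mul_assoc, ← pow_succ]
  rw [this, ← hwr r, smul_mul_assoc, wr_mul_u r hr, smul_zero, smul_zero]

lemma hv3 : (π (X 1)) ^ 3 = 0 := by
  refine smul_cancel r two_ne_zero ?_
  have : (2 : ℂ) • (π (X 1)) ^ 3 = ((2 : ℂ) • (π (X 1)) ^ 2) * π (X 1) := by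
    rw [smul_mul_assoc, ← pow_succ]
  rw [this, show (2 : ℂ) • (π (X 1)) ^ 2 = (2 : ℂ) • (π (X 0)) ^ 2 by rw [hvveq r],
    ← hwr r, smul_mul_assoc, wr_mul_v r hr, smul_zero, smul_zero]

lemma hw_succ : (π (X 2)) ^ (r + 1) = 0 := by
  rw [pow_succ, hwr' r hr, smul_mul_assoc, mul_comm ((π (X 0)) ^ 2) (π (X 2)),
    pow_two, ← mul_assoc, mul_comm (π (X 2)) (π (X 0)), huw r, zero_mul, smul_zero]

lemma mem_span_pure_u (a : ℕ) :
    (π (X 0)) ^ a ∈ Submodule.span ℂ (Set.range (bvec r)) := by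
  match a with
  | 0 =>
    refine Submodule.subset_span ⟨⟨0, by omega⟩, ?_⟩
    simp [bvec, bpoly]
  | 1 =>
    refine Submodule.subset_span ⟨⟨1, by omega⟩, ?_⟩
    simp [bvec, bpoly]
  | 2 =>
    refine Submodule.subset_span ⟨⟨r + 2, by omega⟩, ?_⟩
    have h0 : r + 2 ≠ 0 := by omega
    have h1 : r + 2 ≠ 1 := by omega
    have h2 : r + 2 ≠ 2 := by omega
    simp [bvec, bpoly, h0, h1, h2, map_pow]
    rw [if_neg (by omega : r ≠ 0), map_pow]
  | (k + 3) =>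
    have : (π (X 0)) ^ (k + 3) = (π (X 0)) ^ k * (π (X 0)) ^ 3 := by
      rw [← pow_add]
    rw [this, hu3 r hr, mul_zero]
    exact Submodule.zero_mem _

lemma mem_span_pure_v (b : ℕ) :
    (π (X 1)) ^ b ∈ Submodule.span ℂ (Set.range (bvec r)) := by
  match b with
  | 0 =>
    refine Submodule.subset_span ⟨⟨0, by omega⟩, ?_⟩
    simp [bvec, bpoly]
  | 1 =>
    refine Submodule.subset_span ⟨⟨2, by omega⟩, ?_⟩
    simp [bvec, bpoly]
  | 2 =>
    rw [hvveq r]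
    exact mem_span_pure_u r hr 2
  | (k + 3) =>
    have : (π (X 1)) ^ (k + 3) = (π (X 1)) ^ k * (π (X 1)) ^ 3 := by
      rw [← pow_add]
    rw [this, hv3 r hr, mul_zero]
    exact Submodule.zero_mem _

lemma mem_span_pure_w (c : ℕ) :
    (π (X 2)) ^ c ∈ Submodule.span ℂ (Set.range (bvec r)) := by
  rcases Nat.lt_or_ge c (r + 1) with h | h
  · rcases Nat.eq_zero_or_pos c with hc0 | hc1
    · subst hc0
      refine Submodule.subset_span ⟨⟨0, by omega⟩, ?_⟩
      simp [bvec, bpoly]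
    · rcases Nat.lt_or_ge c r with hcr | hcr
      · refine Submodule.subset_span ⟨⟨c + 2, by omega⟩, ?_⟩
        have h0 : c + 2 ≠ 0 := by omega
        have h1 : c + 2 ≠ 1 := by omega
        have h2 : c + 2 ≠ 2 := by omega
        have h3 : c + 2 ≠ r + 2 := by omega
        simp only [bvec, bpoly, h0, h1, h2, h3, if_false]
        rw [map_pow]
        congr 1 <;> omega
      · have hcr' : c = r := by omega
        rw [hcr', hwr' r hr]
        exact Submodule.smul_mem _ _ (mem_span_pure_u r hr 2)
  · obtain ⟨k, rfl⟩ : ∃ k, c = k + (r + 1) := ⟨c - (r + 1), by omega⟩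
    rw [pow_add, hw_succ r hr, mul_zero]
    exact Submodule.zero_mem _

lemma mem_span_monomial (a b c : ℕ) :
    (π (X 0)) ^ a * (π (X 1)) ^ b * (π (X 2)) ^ c
      ∈ Submodule.span ℂ (Set.range (bvec r)) := by
  match a, b, c with
  | a + 1, b + 1, c =>
    have : (π (X 0)) ^ (a + 1) * (π (X 1)) ^ (b + 1) * (π (X 2)) ^ c
        = (π (X 0) * π (X 1)) * ((π (X 0)) ^ a * (π (X 1)) ^ b * (π (X 2)) ^ c) := by
      ring
    rw [this, huv r, zero_mul]
    exact Submodule.zero_mem _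
  | a + 1, 0, c + 1 =>
    have : (π (X 0)) ^ (a + 1) * (π (X 1)) ^ 0 * (π (X 2)) ^ (c + 1)
        = (π (X 0) * π (X 2)) * ((π (X 0)) ^ a * (π (X 2)) ^ c) := by
      ring
    rw [this, huw r, zero_mul]
    exact Submodule.zero_mem _
  | 0, b + 1, c + 1 =>
    have : (π (X 0)) ^ 0 * (π (X 1)) ^ (b + 1) * (π (X 2)) ^ (c + 1)
        = (π (X 1) * π (X 2)) * ((π (X 1)) ^ b * (π (X 2)) ^ c) := by
      ring
    rw [this, hvw r, zero_mul]
    exact Submodule.zero_mem _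
  | a, 0, 0 =>
    simpa using mem_span_pure_u r hr a
  | 0, b, 0 =>
    simpa using mem_span_pure_v r hr b
  | 0, 0, c =>
    simpa using mem_span_pure_w r hr c

lemma span_eq_top :
    ⊤ ≤ Submodule.span ℂ (Set.range (bvec r)) := by
  have key : ∀ p, π p ∈ Submodule.span ℂ (Set.range (bvec r)) := by
   intro p
   induction p using MvPolynomial.induction_on' with
   | monomial m c =>
      have h1 : (monomial m c : MvPolynomial (Fin 3) ℂ) = c • monomial m 1 := by
        rw [smul_monomial, smul_eq_mul, mul_one]
      rw [h1, mk_smul r, monomial_eq_prod, map_mul, map_mul, map_pow, map_pow, map_pow]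
      exact Submodule.smul_mem _ _ (mem_span_monomial r hr (m 0) (m 1) (m 2))
   | add p q hp hq =>
      rw [map_add]
      exact Submodule.add_mem _ hp hq
  intro ξ _
  obtain ⟨p, rfl⟩ := Ideal.Quotient.mk_surjective (I := orbCohomIdeal r) ξ
  exact key p

lemma phi_bpoly (i : Fin (r + 3)) : phi r (bpoly r i) = Pi.single i 1 := by
  have hilt := i.isLt
  by_cases h0 : (i : ℕ) = 0
  · have : bpoly r i = monomial 0 1 := by
      simp [bpoly, h0, monomial_zero']
    rw [this, phi_monomial, one_smul]
    unfold nf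
    simp only [Finsupp.coe_zero, Pi.zero_apply]
    have hi : i = ⟨0, by omega⟩ := Fin.ext h0
    rw [hi]
    unfold nf3 es
    norm_num
  · by_cases h1 : (i : ℕ) = 1
    · have : bpoly r i = monomial (Finsupp.single 0 1) 1 := by
        rw [bpoly, if_neg h0, if_pos h1, ← X_pow_eq_monomial, pow_one]
      rw [this, phi_monomial, one_smul]
      unfold nf
      rw [show (Finsupp.single (0 : Fin 3) 1) 0 = 1 by simp,
        show (Finsupp.single (0 : Fin 3) 1) 1 = 0 by simp,
        show (Finsupp.single (0 : Fin 3) 1) 2 = 0 by simp]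
      have hi : i = ⟨1, by omega⟩ := Fin.ext h1
      rw [hi]
      unfold nf3 es
      norm_num
    · by_cases h2 : (i : ℕ) = 2
      · have : bpoly r i = monomial (Finsupp.single 1 1) 1 := by
          rw [bpoly, if_neg h0, if_neg h1, if_pos h2, ← X_pow_eq_monomial, pow_one]
        rw [this, phi_monomial, one_smul]
        unfold nf
        rw [show (Finsupp.single (1 : Fin 3) 1) 0 = 0 by simp,
          show (Finsupp.single (1 : Fin 3) 1) 1 = 1 by simp,
          show (Finsupp.single (1 : Fin 3) 1) 2 = 0 by simp]
        have hi : i = ⟨2, by omega⟩ := Fin.ext h2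
        rw [hi]
        unfold nf3 es
        norm_num
      · by_cases h3 : (i : ℕ) = r + 2
        · have : bpoly r i = monomial (Finsupp.single 0 2) 1 := by
            rw [bpoly, if_neg h0, if_neg h1, if_neg h2, if_pos h3, X_pow_eq_monomial]
          rw [this, phi_monomial, one_smul]
          unfold nf
          rw [show (Finsupp.single (0 : Fin 3) 2) 0 = 2 by simp,
            show (Finsupp.single (0 : Fin 3) 2) 1 = 0 by simp,
            show (Finsupp.single (0 : Fin 3) 2) 2 = 0 by simp]
          have hi : i = ⟨r + 2, by omega⟩ := Fin.ext h3
          rw [hi]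
          unfold nf3 es
          norm_num
        · have hk3 : 3 ≤ (i : ℕ) := by omega
          have hkr : (i : ℕ) ≤ r + 1 := by omega
          have : bpoly r i = monomial (Finsupp.single 2 ((i : ℕ) - 2)) 1 := by
            rw [bpoly, if_neg h0, if_neg h1, if_neg h2, if_neg h3, X_pow_eq_monomial]
          rw [this, phi_monomial, one_smul]
          unfold nf
          rw [show (Finsupp.single (2 : Fin 3) ((i : ℕ) - 2)) 0 = 0 by simp,
            show (Finsupp.single (2 : Fin 3) ((i : ℕ) - 2)) 1 = 0 by simp,
            show (Finsupp.single (2 : Fin 3) ((i : ℕ) - 2)) 2 = (i : ℕ) - 2 by simp]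
          have hi : i = ⟨(i : ℕ) - 2 + 2, by omega⟩ := Fin.ext (show (i : ℕ) = (i : ℕ) - 2 + 2 by omega)
          conv_rhs => rw [hi]
          unfold nf3 es
          rw [if_neg (by omega), if_neg (by omega), if_pos ⟨rfl, rfl⟩,
            dif_pos (by omega : (i : ℕ) - 2 < r)]

lemma bvec_li : LinearIndependent ℂ (bvec r) := by
  rw [Fintype.linearIndependent_iff]
  intro g hg
  set P : MvPolynomial (Fin 3) ℂ := ∑ i, g i • bpoly r i with hP
  have hPmk : π P = 0 := by
    rw [hP, map_sum]
    rw [show (∑ i, π (g i • bpoly r i)) = ∑ i, g i • π (bpoly r i) by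
      refine Finset.sum_congr rfl fun i _ => ?_
      rw [mk_smul r]]
    exact hg
  have hmem : P ∈ orbCohomIdeal r := Ideal.Quotient.eq_zero_iff_mem.mp hPmk
  have h0 : phi r P = 0 := phi_ideal r (by omega) P hmem
  have hphiP : phi r P = g := by
    rw [hP, map_sum]
    rw [show (∑ i, phi r (g i • bpoly r i)) = ∑ i, Pi.single i (g i) by
      refine Finset.sum_congr rfl fun i _ => ?_
      rw [map_smul, phi_bpoly r hr, ← Pi.single_smul, smul_eq_mul, mul_one]]
    exact Finset.univ_sum_single g
  intro i
  have := congrFun (hphiP ▸ h0) i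
  simpa using this

end quotrels

end OrbAux

/-- `A = ℂ[x,y,z]/(xy, xz, yz, 2x²-2y², 2x²-rz^r, 2y²-rz^r)` is a `ℂ`-vector space of
dimension `r + 3`, with basis `{1, x, y, z, z², …, z^{r-1}, x²}`. -/
theorem orbCohom_dimension (r : ℕ) (hr : 2 ≤ r) :
    FiniteDimensional ℂ (MvPolynomial (Fin 3) ℂ ⧸ orbCohomIdeal r) ∧
    Module.finrank ℂ (MvPolynomial (Fin 3) ℂ ⧸ orbCohomIdeal r) = r + 3 ∧
    ∃ B : Module.Basis (Fin (r + 3)) ℂ (MvPolynomial (Fin 3) ℂ ⧸ orbCohomIdeal r),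
      ∀ i : Fin (r + 3),
        B i = Ideal.Quotient.mk (orbCohomIdeal r)
          (if (i : ℕ) = 0 then 1
           else if (i : ℕ) = 1 then X 0
           else if (i : ℕ) = 2 then X 1
           else if (i : ℕ) = r + 2 then X 0 ^ 2
           else X 2 ^ ((i : ℕ) - 2)) := by
  have hli := OrbAux.bvec_li r hr
  have hsp := OrbAux.span_eq_top r hr
  let B : Module.Basis (Fin (r + 3)) ℂ (MvPolynomial (Fin 3) ℂ ⧸ orbCohomIdeal r) :=
    Module.Basis.mk hli hsp
  have hB : ∀ i, B i = OrbAux.bvec r i := fun i => Module.Basis.mk_apply hli hsp i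
  have hfin : FiniteDimensional ℂ (MvPolynomial (Fin 3) ℂ ⧸ orbCohomIdeal r) :=
    Module.Finite.of_basis B
  refine ⟨hfin, ?_, B, fun i => hB i⟩
  rw [Module.finrank_eq_card_basis B, Fintype.card_fin]
end
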